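/- arXiv:1709.06301 — 2 statements merged into one kernel-verified Lean document; each statement's English description precedes it below -/
import Mathlib

section
/- Let G₁ and G₂ be simple connected graphs with n₂ = |V(G₂)| vertices in G₂ and m₁ = |E(G₁)|, m₂ = |E(G₂)| edges. Then the F-index of the edge S-join satisfies F(G₁ ∨̱_S G₂) = F(G₁) + F(G₂) + 3m₁M₁(G₂) + 6m₁²m₂ + m₁(n₂ + 2)³ + n₂m₁³. -/
/-- The subdivision graph `S(G)`: a new vertex is inserted into each edge of `G`
(each edge is replaced by a path of length 2). The inserted vertices form the
right summand `↥G.edgeSet`. -/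
def Sgraph {V : Type*} (G : SimpleGraph V) : SimpleGraph (V ⊕ ↥G.edgeSet) where
  Adj x y :=
    match x, y with
    | Sum.inl v, Sum.inr e => v ∈ (e : Sym2 V)
    | Sum.inr e, Sum.inl v => v ∈ (e : Sym2 V)
    | _, _ => False
  symm := by constructor; rintro (v | e) (w | f) h <;> exact h
  loopless := by constructor; rintro (v | e) h <;> exact h

/-- The graph `R(G)`: obtained from `G` by inserting a new vertex into each edge of `G`
and joining each new vertex to the end vertices of its corresponding edge. -/
def Rgraph {V : Type*} (G : SimpleGraph V) : SimpleGraph (V ⊕ ↥G.edgeSet) where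
  Adj x y :=
    match x, y with
    | Sum.inl v, Sum.inl w => G.Adj v w
    | Sum.inl v, Sum.inr e => v ∈ (e : Sym2 V)
    | Sum.inr e, Sum.inl v => v ∈ (e : Sym2 V)
    | Sum.inr _, Sum.inr _ => False
  symm := by
    constructor
    rintro (v | e) (w | f) h
    · exact G.adj_symm h
    · exact h
    · exact h
    · exact h
  loopless := by
    constructor
    rintro (v | e) h
    · exact G.irrefl h
    · exact h

/-- The graph `Q(G)`: obtained from `G` by inserting a new vertex into each edge of `G`,
then joining by edges those pairs of new vertices lying on adjacent edges of `G`. -/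
def Qgraph {V : Type*} (G : SimpleGraph V) : SimpleGraph (V ⊕ ↥G.edgeSet) where
  Adj x y :=
    match x, y with
    | Sum.inl _, Sum.inl _ => False
    | Sum.inl v, Sum.inr e => v ∈ (e : Sym2 V)
    | Sum.inr e, Sum.inl v => v ∈ (e : Sym2 V)
    | Sum.inr e, Sum.inr f => e ≠ f ∧ ∃ v, v ∈ (e : Sym2 V) ∧ v ∈ (f : Sym2 V)
  symm := by
    constructor
    rintro (v | e) (w | f) h
    · exact h
    · exact h
    · exact h
    · exact ⟨h.1.symm, by obtain ⟨v, h1, h2⟩ := h.2; exact ⟨v, h2, h1⟩⟩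
  loopless := by
    constructor
    rintro (v | e) h
    · exact h
    · exact h.1 rfl

/-- The total graph `T(G)`: obtained from `G` by inserting a new vertex into each edge,
joining each new vertex to the end vertices of its corresponding edge, and joining by
edges those pairs of new vertices lying on adjacent edges of `G`. -/
def Tgraph {V : Type*} (G : SimpleGraph V) : SimpleGraph (V ⊕ ↥G.edgeSet) where
  Adj x y :=
    match x, y with
    | Sum.inl v, Sum.inl w => G.Adj v w
    | Sum.inl v, Sum.inr e => v ∈ (e : Sym2 V)
    | Sum.inr e, Sum.inl v => v ∈ (e : Sym2 V)
    | Sum.inr e, Sum.inr f => e ≠ f ∧ ∃ v, v ∈ (e : Sym2 V) ∧ v ∈ (f : Sym2 V)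
  symm := by
    constructor
    rintro (v | e) (w | f) h
    · exact G.adj_symm h
    · exact h
    · exact h
    · exact ⟨h.1.symm, by obtain ⟨v, h1, h2⟩ := h.2; exact ⟨v, h2, h1⟩⟩
  loopless := by
    constructor
    rintro (v | e) h
    · exact G.irrefl h
    · exact h.1 rfl

/-- The disjoint union of `H` and `K` together with all edges joining a vertex `a` of `H`
with `P a` to every vertex of `K`. -/
def joinOn {A B : Type*} (H : SimpleGraph A) (K : SimpleGraph B) (P : A → Prop) :
    SimpleGraph (A ⊕ B) where
  Adj x y :=
    match x, y with
    | Sum.inl a, Sum.inl a' => H.Adj a a'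
    | Sum.inr b, Sum.inr b' => K.Adj b b'
    | Sum.inl a, Sum.inr _ => P a
    | Sum.inr _, Sum.inl a => P a
  symm := by
    constructor
    rintro (a | b) (a' | b') h
    · exact H.adj_symm h
    · exact h
    · exact h
    · exact K.adj_symm h
  loopless := by
    constructor
    rintro (a | b) h
    · exact H.irrefl h
    · exact K.irrefl h

/-- The vertex S-join `G₁ ∨̇_S G₂`: obtained from `S(G₁)` and `G₂` by joining each vertex
of `V(G₁)` to every vertex of `G₂`. -/
def vertexSJoin {V₁ V₂ : Type*} (G₁ : SimpleGraph V₁) (G₂ : SimpleGraph V₂) :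
    SimpleGraph ((V₁ ⊕ ↥G₁.edgeSet) ⊕ V₂) :=
  joinOn (Sgraph G₁) G₂ (fun x => x.isLeft)

/-- The edge S-join `G₁ ∨̱_S G₂`: obtained from `S(G₁)` and `G₂` by joining each inserted
vertex (each vertex of `I(G₁)`) to every vertex of `G₂`. -/
def edgeSJoin {V₁ V₂ : Type*} (G₁ : SimpleGraph V₁) (G₂ : SimpleGraph V₂) :
    SimpleGraph ((V₁ ⊕ ↥G₁.edgeSet) ⊕ V₂) :=
  joinOn (Sgraph G₁) G₂ (fun x => x.isRight)

/-- The vertex R-join `G₁ ∨̇_R G₂`. -/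
def vertexRJoin {V₁ V₂ : Type*} (G₁ : SimpleGraph V₁) (G₂ : SimpleGraph V₂) :
    SimpleGraph ((V₁ ⊕ ↥G₁.edgeSet) ⊕ V₂) :=
  joinOn (Rgraph G₁) G₂ (fun x => x.isLeft)

/-- The edge R-join `G₁ ∨̱_R G₂`. -/
def edgeRJoin {V₁ V₂ : Type*} (G₁ : SimpleGraph V₁) (G₂ : SimpleGraph V₂) :
    SimpleGraph ((V₁ ⊕ ↥G₁.edgeSet) ⊕ V₂) :=
  joinOn (Rgraph G₁) G₂ (fun x => x.isRight)

/-- The vertex Q-join `G₁ ∨̇_Q G₂`. -/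
def vertexQJoin {V₁ V₂ : Type*} (G₁ : SimpleGraph V₁) (G₂ : SimpleGraph V₂) :
    SimpleGraph ((V₁ ⊕ ↥G₁.edgeSet) ⊕ V₂) :=
  joinOn (Qgraph G₁) G₂ (fun x => x.isLeft)

/-- The edge Q-join `G₁ ∨̱_Q G₂`. -/
def edgeQJoin {V₁ V₂ : Type*} (G₁ : SimpleGraph V₁) (G₂ : SimpleGraph V₂) :
    SimpleGraph ((V₁ ⊕ ↥G₁.edgeSet) ⊕ V₂) :=
  joinOn (Qgraph G₁) G₂ (fun x => x.isRight)

/-- The vertex T-join `G₁ ∨̇_T G₂`. -/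
def vertexTJoin {V₁ V₂ : Type*} (G₁ : SimpleGraph V₁) (G₂ : SimpleGraph V₂) :
    SimpleGraph ((V₁ ⊕ ↥G₁.edgeSet) ⊕ V₂) :=
  joinOn (Tgraph G₁) G₂ (fun x => x.isLeft)

/-- The edge T-join `G₁ ∨̱_T G₂`. -/
def edgeTJoin {V₁ V₂ : Type*} (G₁ : SimpleGraph V₁) (G₂ : SimpleGraph V₂) :
    SimpleGraph ((V₁ ⊕ ↥G₁.edgeSet) ⊕ V₂) :=
  joinOn (Tgraph G₁) G₂ (fun x => x.isRight)

/-- Degree of a vertex in a graph on a finite vertex type. -/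
noncomputable def gdeg {V : Type*} [Finite V] (G : SimpleGraph V) (v : V) : ℕ :=
  haveI : Fintype ↥(G.neighborSet v) := Fintype.ofFinite _
  G.degree v

/-- The forgotten topological index (F-index): `F(G) = ∑_{v ∈ V(G)} d_G(v)³`. -/
noncomputable def Findex {V : Type*} [Finite V] (G : SimpleGraph V) : ℕ :=
  haveI := Fintype.ofFinite V
  ∑ v : V, gdeg G v ^ 3

/-- The first Zagreb index: `M₁(G) = ∑_{v ∈ V(G)} d_G(v)²`. -/
noncomputable def M1 {V : Type*} [Finite V] (G : SimpleGraph V) : ℕ :=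
  haveI := Fintype.ofFinite V
  ∑ v : V, gdeg G v ^ 2

/-- `M₄(G) = ∑_{v ∈ V(G)} d_G(v)⁴`. -/
noncomputable def M4 {V : Type*} [Finite V] (G : SimpleGraph V) : ℕ :=
  haveI := Fintype.ofFinite V
  ∑ v : V, gdeg G v ^ 4

/-- The hyper Zagreb index: `HM(G) = ∑_{uv ∈ E(G)} (d_G(u) + d_G(v))²`. -/
noncomputable def HM {V : Type*} [Finite V] (G : SimpleGraph V) : ℕ :=
  haveI : Fintype ↥G.edgeSet := Fintype.ofFinite _
  ∑ e : ↥G.edgeSet,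
    Sym2.lift ⟨fun u v => (gdeg G u + gdeg G v) ^ 2,
      fun u v => by dsimp only; rw [add_comm]⟩ (e : Sym2 V)

/-- The redefined Zagreb index:
`ReZM(G) = ∑_{uv ∈ E(G)} d_G(u) d_G(v) (d_G(u) + d_G(v))`. -/
noncomputable def ReZM {V : Type*} [Finite V] (G : SimpleGraph V) : ℕ :=
  haveI : Fintype ↥G.edgeSet := Fintype.ofFinite _
  ∑ e : ↥G.edgeSet,
    Sym2.lift ⟨fun u v => gdeg G u * gdeg G v * (gdeg G u + gdeg G v),
      fun u v => by dsimp only; ring⟩ (e : Sym2 V)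

/-- The number of edges of `G`. -/
noncomputable def numEdges {V : Type*} (G : SimpleGraph V) : ℕ :=
  Nat.card ↥G.edgeSet

section Aux

lemma card_false {α : Type*} (p : α → Prop) (h : ∀ a, ¬ p a) : Nat.card {a // p a} = 0 := by
  haveI : IsEmpty {a // p a} := ⟨fun x => h x.1 x.2⟩
  exact Nat.card_of_isEmpty

lemma card_true {α : Type*} (p : α → Prop) (h : ∀ a, p a) : Nat.card {a // p a} = Nat.card α :=
  Nat.card_congr (Equiv.subtypeUnivEquiv h)

lemma gdeg_eq_degree {V : Type*} [Finite V] (G : SimpleGraph V) (v : V)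
    [Fintype (G.neighborSet v)] : gdeg G v = G.degree v := by
  unfold gdeg
  congr!

lemma gdeg_eq_natCard {V : Type*} [Finite V] (G : SimpleGraph V) (v : V) :
    gdeg G v = Nat.card (G.neighborSet v) := by
  haveI : Fintype (G.neighborSet v) := Fintype.ofFinite _
  rw [gdeg_eq_degree, ← SimpleGraph.card_neighborSet_eq_degree, Nat.card_eq_fintype_card]

lemma Findex_def {V : Type*} [Finite V] [Fintype V] (G : SimpleGraph V) :
    Findex G = ∑ v, gdeg G v ^ 3 := by
  unfold Findex
  congr!

lemma M1_def {V : Type*} [Finite V] [Fintype V] (G : SimpleGraph V) :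
    M1 G = ∑ v, gdeg G v ^ 2 := by
  unfold M1
  congr!

lemma card_adj_split {α β γ : Type*} [Finite α] [Finite β] [Finite γ]
    (p : (α ⊕ β) ⊕ γ → Prop) :
    Nat.card {y // p y} = Nat.card {a // p (.inl (.inl a))} + Nat.card {b // p (.inl (.inr b))}
      + Nat.card {c // p (.inr c)} := by
  rw [Nat.card_congr (Equiv.subtypeSum (p := p)), Nat.card_sum,
    Nat.card_congr (Equiv.subtypeSum (p := fun x => p (Sum.inl x))), Nat.card_sum]

lemma natCard_incident {V : Type*} [Finite V] (G : SimpleGraph V) (v : V) :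
    Nat.card {e : G.edgeSet // v ∈ (e : Sym2 V)} = gdeg G v := by
  classical
  rw [gdeg_eq_natCard]
  exact Nat.card_congr
    ((⟨fun e => ⟨e.1.1, e.1.2, e.2⟩, fun p => ⟨⟨p.1, p.2.1⟩, p.2.2⟩, fun _ => rfl, fun _ => rfl⟩ :
      {e : G.edgeSet // v ∈ (e : Sym2 V)} ≃ G.incidenceSet v).trans
        (G.incidenceSetEquivNeighborSet v))

lemma card_mem_sym2 {V : Type*} {a b : V} (hab : a ≠ b) :
    Nat.card {v : V // v ∈ s(a, b)} = 2 := by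
  have h : Nat.card {v : V // v ∈ s(a, b)} = Nat.card ({a, b} : Set V) :=
    Nat.card_congr (Equiv.subtypeEquivRight (fun v => by
      simp [Sym2.mem_iff, Set.mem_insert_iff]))
  rw [h, Nat.card_coe_set_eq, Set.ncard_pair hab]

lemma card_mem_edge {V : Type*} (G : SimpleGraph V) (e : G.edgeSet) :
    Nat.card {v : V // v ∈ (e : Sym2 V)} = 2 := by
  obtain ⟨e, he⟩ := e
  revert he
  refine Sym2.ind (fun x y he => ?_) e
  exact card_mem_sym2 (G.ne_of_adj (G.mem_edgeSet.mp he))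

section Deg

variable {V₁ V₂ : Type*} [Finite V₁] [Finite V₂] (G₁ : SimpleGraph V₁) (G₂ : SimpleGraph V₂)

lemma gdeg_eSJ_vertex (v : V₁) :
    gdeg (edgeSJoin G₁ G₂) (Sum.inl (Sum.inl v)) = gdeg G₁ v := by
  rw [gdeg_eq_natCard]
  show Nat.card {y // (edgeSJoin G₁ G₂).Adj (Sum.inl (Sum.inl v)) y} = _
  rw [card_adj_split]
  rw [card_false (fun w : V₁ => (edgeSJoin G₁ G₂).Adj (Sum.inl (Sum.inl v)) (Sum.inl (Sum.inl w)))
      (fun w hw => hw),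
    card_false (fun b : V₂ => (edgeSJoin G₁ G₂).Adj (Sum.inl (Sum.inl v)) (Sum.inr b))
      (fun b hb => Bool.noConfusion hb)]
  simp only [zero_add, add_zero]; exact natCard_incident G₁ v

lemma gdeg_eSJ_edge (e : G₁.edgeSet) :
    gdeg (edgeSJoin G₁ G₂) (Sum.inl (Sum.inr e)) = Nat.card V₂ + 2 := by
  rw [gdeg_eq_natCard]
  show Nat.card {y // (edgeSJoin G₁ G₂).Adj (Sum.inl (Sum.inr e)) y} = _
  rw [card_adj_split]
  have h1 : Nat.card {w : V₁ //
      (edgeSJoin G₁ G₂).Adj (Sum.inl (Sum.inr e)) (Sum.inl (Sum.inl w))} = 2 :=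
    card_mem_edge G₁ e
  have h2 : Nat.card {f : G₁.edgeSet //
      (edgeSJoin G₁ G₂).Adj (Sum.inl (Sum.inr e)) (Sum.inl (Sum.inr f))} = 0 :=
    card_false _ (fun f hf => hf)
  have h3 : Nat.card {b : V₂ //
      (edgeSJoin G₁ G₂).Adj (Sum.inl (Sum.inr e)) (Sum.inr b)} = Nat.card V₂ :=
    card_true _ (fun b => rfl)
  omega

lemma gdeg_eSJ_right (w : V₂) :
    gdeg (edgeSJoin G₁ G₂) (Sum.inr w) = Nat.card G₁.edgeSet + gdeg G₂ w := by
  rw [gdeg_eq_natCard]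
  show Nat.card {y // (edgeSJoin G₁ G₂).Adj (Sum.inr w) y} = _
  rw [card_adj_split]
  have h1 : Nat.card {v : V₁ //
      (edgeSJoin G₁ G₂).Adj (Sum.inr w) (Sum.inl (Sum.inl v))} = 0 :=
    card_false _ (fun v hv => Bool.noConfusion hv)
  have h2 : Nat.card {e : G₁.edgeSet //
      (edgeSJoin G₁ G₂).Adj (Sum.inr w) (Sum.inl (Sum.inr e))} = Nat.card G₁.edgeSet :=
    card_true _ (fun e => rfl)
  have h3 : Nat.card {b : V₂ //
      (edgeSJoin G₁ G₂).Adj (Sum.inr w) (Sum.inr b)} = gdeg G₂ w := by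
    rw [gdeg_eq_natCard]; rfl
  omega

end Deg

lemma sum_gdeg {V : Type*} [Finite V] [Fintype V] (G : SimpleGraph V) :
    ∑ v, gdeg G v = 2 * numEdges G := by
  classical
  haveI : DecidableRel G.Adj := Classical.decRel _
  have h : ∀ v, gdeg G v = G.degree v := fun v => gdeg_eq_degree G v
  simp only [h]
  rw [SimpleGraph.sum_degrees_eq_twice_card_edges, numEdges, Nat.card_eq_fintype_card,
    SimpleGraph.edgeFinset_card]

end Aux


theorem Findex_edgeSJoin {V₁ V₂ : Type*} [Finite V₁] [Finite V₂]
    (G₁ : SimpleGraph V₁) (G₂ : SimpleGraph V₂)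
    (hc₁ : G₁.Connected) (hc₂ : G₂.Connected)
    (n₂ m₁ m₂ : ℕ)
    (hn₂ : n₂ = Nat.card V₂)
    (hm₁ : m₁ = numEdges G₁) (hm₂ : m₂ = numEdges G₂) :
    (Findex (edgeSJoin G₁ G₂) : ℤ) =
      (Findex G₁ : ℤ) + (Findex G₂ : ℤ) + 3 * (m₁ : ℤ) * (M1 G₂ : ℤ)
        + 6 * (m₁ : ℤ) ^ 2 * (m₂ : ℤ) + (m₁ : ℤ) * ((n₂ : ℤ) + 2) ^ 3 + (n₂ : ℤ) * (m₁ : ℤ) ^ 3 := by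
  classical
  haveI iV₁ := Fintype.ofFinite V₁
  haveI iV₂ := Fintype.ofFinite V₂
  haveI iE := Fintype.ofFinite ↥G₁.edgeSet
  subst hn₂ hm₁ hm₂
  rw [Findex_def, Fintype.sum_sum_type, Fintype.sum_sum_type]
  simp only [gdeg_eSJ_vertex, gdeg_eSJ_edge, gdeg_eSJ_right]
  have hE : numEdges G₁ = Fintype.card ↥G₁.edgeSet := Nat.card_eq_fintype_card
  have hV₂ : Nat.card V₂ = Fintype.card V₂ := Nat.card_eq_fintype_card
  have hsum2 : ∑ w, gdeg G₂ w = 2 * numEdges G₂ := sum_gdeg G₂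
  push_cast
  rw [Findex_def G₁, Findex_def G₂, M1_def G₂]
  push_cast
  rw [Finset.sum_const, Finset.card_univ, ← hE]
  have h1 : ∑ x : V₂, ((Nat.card ↑G₁.edgeSet : ℤ) + (gdeg G₂ x : ℤ)) ^ 3
      = ∑ x : V₂, ((gdeg G₂ x : ℤ) ^ 3 + 3 * (numEdges G₁ : ℤ) * (gdeg G₂ x : ℤ) ^ 2
        + 3 * (numEdges G₁ : ℤ) ^ 2 * (gdeg G₂ x : ℤ) + (numEdges G₁ : ℤ) ^ 3) :=
    Finset.sum_congr rfl (fun x _ => by rw [numEdges]; ring)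
  rw [nsmul_eq_mul, h1, Finset.sum_add_distrib, Finset.sum_add_distrib, Finset.sum_add_distrib,
    ← Finset.mul_sum, ← Finset.mul_sum, Finset.sum_const, Finset.card_univ, ← hV₂, nsmul_eq_mul]
  have h2 : (∑ x : V₂, (gdeg G₂ x : ℤ)) = 2 * (numEdges G₂ : ℤ) := by exact_mod_cast hsum2
  linear_combination 3 * (numEdges G₁ : ℤ) ^ 2 * h2
end

section
/- For integers n, m ≥ 3, the F-index of the edge S-join of the cycle C_n and the cycle C_m is F(C_n ∨̱_S C_m) = n{(m + 2)³ + 6mn + mn²} + 12mn + 8m + 8n. -/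
theorem Findex_edgeSJoin_ex12 (n m : ℕ) (hn : 3 ≤ n) (hm : 3 ≤ m) :
    (Findex (edgeSJoin (SimpleGraph.cycleGraph n) (SimpleGraph.cycleGraph m)) : ℤ) =
      (n : ℤ) * (((m : ℤ) + 2) ^ 3 + 6 * (m : ℤ) * (n : ℤ) + (m : ℤ) * (n : ℤ) ^ 2) + 12 * (m : ℤ) * (n : ℤ) + 8 * (m : ℤ) + 8 * (n : ℤ) := by
  classical
  obtain ⟨n', rfl⟩ : ∃ k, n = k + 3 := ⟨n - 3, by omega⟩
  obtain ⟨m', rfl⟩ : ∃ k, m = k + 3 := ⟨m - 3, by omega⟩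
  set J := edgeSJoin (SimpleGraph.cycleGraph (n' + 3)) (SimpleGraph.cycleGraph (m' + 3)) with hJ
  have hE : Nat.card ↥(SimpleGraph.cycleGraph (n' + 3)).edgeSet = n' + 3 := by
    have h := SimpleGraph.sum_degrees_eq_twice_card_edges (SimpleGraph.cycleGraph (n' + 3))
    simp only [SimpleGraph.cycleGraph_degree_three_le, Finset.sum_const, Finset.card_univ,
      Fintype.card_fin, smul_eq_mul] at h
    rw [Nat.card_coe_set_eq, Set.ncard_eq_toFinset_card']
    rw [SimpleGraph.edgeFinset] at h
    omega
  have key : ∀ s : Sym2 (Fin (n' + 3)), s ∈ (SimpleGraph.cycleGraph (n' + 3)).edgeSet →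
      {v : Fin (n' + 3) | v ∈ s}.ncard = 2 := by
    intro s hs
    induction s using Sym2.ind with
    | _ a b =>
      rw [SimpleGraph.mem_edgeSet] at hs
      have hab := hs.ne
      have hset : {v : Fin (n' + 3) | v ∈ s(a, b)} = {a, b} := by
        ext v; simp [Sym2.mem_iff]
      rw [hset, Set.ncard_pair hab]
  have hdisj : ∀ (s : Set (Fin (n' + 3) ⊕ ↥(SimpleGraph.cycleGraph (n' + 3)).edgeSet))
      (t : Set (Fin (m' + 3))), Disjoint (Sum.inl '' s) (Sum.inr '' t) := by
    intro s t
    rw [Set.disjoint_left]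
    rintro x ⟨a, _, rfl⟩ ⟨b, _, h⟩
    simp at h
  have hd0 : ∀ v : Fin (n' + 3), gdeg J (Sum.inl (Sum.inl v)) = 2 := by
    intro v
    rw [gdeg_eq_natCard]
    have h1 : J.neighborSet (Sum.inl (Sum.inl v)) =
        (fun e => Sum.inl (Sum.inr e)) ''
          {e : ↥(SimpleGraph.cycleGraph (n' + 3)).edgeSet | v ∈ (e : Sym2 (Fin (n' + 3)))} := by
      ext x
      rcases x with ((w | e) | b) <;>
        simp [hJ, edgeSJoin, joinOn, Sgraph, SimpleGraph.neighborSet]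
    have hinj : Function.Injective (fun e : ↥(SimpleGraph.cycleGraph (n' + 3)).edgeSet =>
        (Sum.inl (Sum.inr e) :
          (Fin (n' + 3) ⊕ ↥(SimpleGraph.cycleGraph (n' + 3)).edgeSet) ⊕ Fin (m' + 3))) :=
      fun a b h => by simpa using h
    rw [h1, Nat.card_coe_set_eq, Set.ncard_image_of_injective _ hinj]
    have h2 : Subtype.val ''
        {e : ↥(SimpleGraph.cycleGraph (n' + 3)).edgeSet | v ∈ (e : Sym2 (Fin (n' + 3)))} =
        (SimpleGraph.cycleGraph (n' + 3)).incidenceSet v := by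
      ext e
      simp [SimpleGraph.incidenceSet]
      tauto
    rw [← Set.ncard_image_of_injective _ Subtype.val_injective, h2,
      Set.ncard_eq_toFinset_card', Set.toFinset_card,
      SimpleGraph.card_incidenceSet_eq_degree, SimpleGraph.cycleGraph_degree_three_le]
  have hd1 : ∀ e : ↥(SimpleGraph.cycleGraph (n' + 3)).edgeSet,
      gdeg J (Sum.inl (Sum.inr e)) = (m' + 3) + 2 := by
    intro e
    rw [gdeg_eq_natCard]
    have h1 : J.neighborSet (Sum.inl (Sum.inr e)) =
        (fun v => Sum.inl (Sum.inl v)) '' {v : Fin (n' + 3) | v ∈ (e : Sym2 (Fin (n' + 3)))} ∪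
        Sum.inr '' (Set.univ : Set (Fin (m' + 3))) := by
      ext x
      rcases x with ((w | f) | b) <;>
        simp [hJ, edgeSJoin, joinOn, Sgraph, SimpleGraph.neighborSet]
    have h2 : ((fun v => Sum.inl (Sum.inl v)) ''
        {v : Fin (n' + 3) | v ∈ (e : Sym2 (Fin (n' + 3)))} :
        Set ((Fin (n' + 3) ⊕ ↥(SimpleGraph.cycleGraph (n' + 3)).edgeSet) ⊕ Fin (m' + 3))) =
        Sum.inl '' (Sum.inl '' {v | v ∈ (e : Sym2 (Fin (n' + 3)))}) := by
      rw [Set.image_image]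
    rw [h1, Nat.card_coe_set_eq, h2,
      Set.ncard_union_eq (hdisj _ _) (Set.toFinite _) (Set.toFinite _),
      Set.ncard_image_of_injective _ Sum.inl_injective,
      Set.ncard_image_of_injective _ Sum.inl_injective,
      Set.ncard_image_of_injective _ Sum.inr_injective,
      key _ e.2]
    simp [Set.ncard_univ, add_comm]
  have hd2 : ∀ b : Fin (m' + 3), gdeg J (Sum.inr b) = (n' + 3) + 2 := by
    intro b
    rw [gdeg_eq_natCard]
    have h1 : J.neighborSet (Sum.inr b) =
        (fun e => Sum.inl (Sum.inr e)) ''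
          (Set.univ : Set ↥(SimpleGraph.cycleGraph (n' + 3)).edgeSet) ∪
        Sum.inr '' ((SimpleGraph.cycleGraph (m' + 3)).neighborSet b) := by
      ext x
      rcases x with ((w | f) | b') <;>
        simp [hJ, edgeSJoin, joinOn, Sgraph, SimpleGraph.neighborSet]
    have h2 : ((fun e => Sum.inl (Sum.inr e)) ''
        (Set.univ : Set ↥(SimpleGraph.cycleGraph (n' + 3)).edgeSet) :
        Set ((Fin (n' + 3) ⊕ ↥(SimpleGraph.cycleGraph (n' + 3)).edgeSet) ⊕ Fin (m' + 3))) =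
        Sum.inl '' (Sum.inr '' Set.univ) := by
      rw [Set.image_image]
    rw [h1, Nat.card_coe_set_eq, h2,
      Set.ncard_union_eq (hdisj _ _) (Set.toFinite _) (Set.toFinite _),
      Set.ncard_image_of_injective _ Sum.inl_injective,
      Set.ncard_image_of_injective _ Sum.inr_injective,
      Set.ncard_image_of_injective _ Sum.inr_injective,
      Set.ncard_univ, hE]
    have h3 : ((SimpleGraph.cycleGraph (m' + 3)).neighborSet b).ncard = 2 := by
      rw [Set.ncard_eq_toFinset_card', Set.toFinset_card,
        SimpleGraph.card_neighborSet_eq_degree, SimpleGraph.cycleGraph_degree_three_le]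
    rw [h3]
  have hF : Findex J = (n' + 3) * 2 ^ 3 + (n' + 3) * ((m' + 3) + 2) ^ 3 +
      (m' + 3) * ((n' + 3) + 2) ^ 3 := by
    unfold Findex
    have hinst : (Fintype.ofFinite
        ((Fin (n' + 3) ⊕ ↥(SimpleGraph.cycleGraph (n' + 3)).edgeSet) ⊕ Fin (m' + 3))) =
        (inferInstance : Fintype
          ((Fin (n' + 3) ⊕ ↥(SimpleGraph.cycleGraph (n' + 3)).edgeSet) ⊕ Fin (m' + 3))) :=
      Subsingleton.elim _ _
    rw [hinst, Fintype.sum_sum_type, Fintype.sum_sum_type]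
    simp only [hd0, hd1, hd2, Finset.sum_const, Finset.card_univ, Fintype.card_fin,
      smul_eq_mul]
    rw [← Nat.card_eq_fintype_card, hE]
  rw [hF]
  push_cast
  ring
end
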